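/- Let X ∈ ℂ^{m×n} with m ≥ n, and let σ₁ ≥ ⋯ ≥ σ_n ≥ 0 be its singular values, i.e., the nonincreasingly ordered square roots of the eigenvalues of the Hermitian matrix X*X. Suppose r ≥ 1 is an integer and 0 ≤ Z < 1 is such that σ_{j+r} ≤ Z·σ_j whenever 1 ≤ j ≤ j+r ≤ n. Then there exists a matrix Y ∈ ℂ^{m×n} of rank at most r with ‖X − Y‖_F ≤ Z·‖X‖_F, where ‖·‖_F denotes the Frobenius norm. -/

import Mathlib

open Matrix Finset

lemma frob_trace {m n : ℕ} (M : Matrix (Fin m) (Fin n) ℂ) :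
    ∑ i, ∑ j, ‖M i j‖ ^ 2 = Complex.re (Mᴴ * M).trace := by
  rw [Matrix.trace]
  simp only [Matrix.diag, Matrix.mul_apply, Matrix.conjTranspose_apply, Complex.re_sum]
  rw [Finset.sum_comm]
  refine Finset.sum_congr rfl fun j _ => Finset.sum_congr rfl fun i _ => ?_
  rw [show (star (M i j)) * M i j = (starRingEnd ℂ) (M i j) * M i j from rfl,
    RCLike.conj_mul]
  simp [← Complex.ofReal_pow]

lemma sandwich {n : ℕ} {V : Matrix (Fin n) (Fin n) ℂ} (hV1 : star V * V = 1)
    (A B : Matrix (Fin n) (Fin n) ℂ) :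
    (V * A * star V) * (V * B * star V) = V * (A * B) * star V := by
  calc (V * A * star V) * (V * B * star V)
      = V * A * (star V * V) * B * star V := by noncomm_ring
    _ = V * (A * B) * star V := by rw [hV1]; noncomm_ring

/-- Paper's Lemma 4.1: if the singular values of `X ∈ ℂ^{m×n}` (`m ≥ n`)
satisfy `σ_{j+r} ≤ Z σ_j` for some `0 ≤ Z < 1` and `r ≥ 1`, then there is a
matrix `Y` of rank at most `r` with `‖X − Y‖_F ≤ Z ‖X‖_F`. -/
theorem low_rank_approx_of_sv_decay
    (m n : ℕ) (hmn : n ≤ m) (X : Matrix (Fin m) (Fin n) ℂ)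
    (σ : Fin n → ℝ) (hanti : Antitone σ) (hnn : ∀ i, 0 ≤ σ i)
    (e : Fin n ≃ Fin n)
    (hsv : ∀ i, σ i ^ 2 = (Matrix.isHermitian_conjTranspose_mul_self X).eigenvalues (e i))
    (r : ℕ) (hr : 1 ≤ r) (Z : ℝ) (hZ0 : 0 ≤ Z) (hZ1 : Z < 1)
    (hdecay : ∀ i j : Fin n, (j : ℕ) = (i : ℕ) + r → σ j ≤ Z * σ i) :
    ∃ Y : Matrix (Fin m) (Fin n) ℂ, Y.rank ≤ r ∧
      Real.sqrt (∑ i, ∑ j, ‖(X - Y) i j‖ ^ 2) ≤ Z * Real.sqrt (∑ i, ∑ j, ‖X i j‖ ^ 2) := by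
  classical
  set hA := Matrix.isHermitian_conjTranspose_mul_self X with hA_def
  set V : Matrix (Fin n) (Fin n) ℂ := ↑(hA.eigenvectorUnitary) with hVdef
  have hV1 : star V * V = 1 := (Unitary.mem_iff.mp hA.eigenvectorUnitary.2).1
  have hV2 : V * star V = 1 := (Unitary.mem_iff.mp hA.eigenvectorUnitary.2).2
  set p : Fin n → ℂ := fun j => if ((e.symm j : Fin n) : ℕ) < r then 1 else 0 with hp
  have hmem : ∀ j : Fin n, p j ≠ 0 → ((e.symm j : Fin n) : ℕ) < r := by
    intro j hj
    by_contra h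
    exact hj (if_neg h)
  set P : Matrix (Fin n) (Fin n) ℂ := Matrix.diagonal p with hP
  set Pi := V * P * star V with hPi
  refine ⟨X * Pi, ?_, ?_⟩
  · -- rank bound
    calc (X * Pi).rank ≤ Pi.rank := Matrix.rank_mul_le_right _ _
      _ ≤ (V * P).rank := by rw [hPi]; exact Matrix.rank_mul_le_left _ _
      _ ≤ P.rank := Matrix.rank_mul_le_right _ _
      _ ≤ r := by
          rw [hP, Matrix.rank_diagonal]
          have h1 : Fintype.card {j // p j ≠ 0} ≤ Fintype.card (Fin r) :=
            Fintype.card_le_of_injective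
              (fun j => ⟨(e.symm j.1 : ℕ), hmem j.1 j.2⟩)
              (fun a b hab => Subtype.ext (e.symm.injective (Fin.ext
                (Fin.mk.inj_iff.mp hab))))
          simpa using h1
  · -- norm bound
    have hΛsp := hA.spectral_theorem
    rw [Unitary.conjStarAlgAut_apply, ← hVdef] at hΛsp
    set Λ : Matrix (Fin n) (Fin n) ℂ :=
      Matrix.diagonal (RCLike.ofReal ∘ hA.eigenvalues) with hΛdef
    have hXY : X - X * Pi = X * (1 - Pi) := by rw [Matrix.mul_sub, Matrix.mul_one]
    have hps : star p = p := by
      funext j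
      by_cases h : ((e.symm j : Fin n) : ℕ) < r <;> simp [hp, h]
    have hPs : star P = P := by
      rw [hP, Matrix.star_eq_conjTranspose, Matrix.diagonal_conjTranspose, hps]
    have h1P : 1 - Pi = V * (1 - P) * star V := by
      rw [Matrix.mul_sub, Matrix.sub_mul, Matrix.mul_one, hV2, hPi]
    have hPih : star Pi = Pi := by
      rw [hPi, Matrix.star_mul, Matrix.star_mul, star_star, hPs, mul_assoc]
    have hherm : (1 - Pi)ᴴ = 1 - Pi := by
      rw [← Matrix.star_eq_conjTranspose, star_sub, star_one, hPih]
    have hfact : (X * (1 - Pi))ᴴ * (X * (1 - Pi))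
        = V * ((1 - P) * Λ * (1 - P)) * star V := by
      calc (X * (1 - Pi))ᴴ * (X * (1 - Pi))
          = (1 - Pi)ᴴ * (Xᴴ * X) * (1 - Pi) := by
            rw [Matrix.conjTranspose_mul]; simp only [Matrix.mul_assoc]
        _ = (V * (1 - P) * star V) * (V * Λ * star V) * (V * (1 - P) * star V) := by
            rw [hherm, h1P, hΛsp]
        _ = V * ((1 - P) * Λ * (1 - P)) * star V := by
            rw [sandwich hV1, sandwich hV1, mul_assoc (1 - P) Λ (1 - P)]
    have hdiag : (1 - P) * Λ * (1 - P)
        = Matrix.diagonal (fun j => (1 - p j) * (hA.eigenvalues j : ℂ) * (1 - p j)) := by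
      rw [hP, hΛdef, ← Matrix.diagonal_one, Matrix.diagonal_sub,
        Matrix.diagonal_mul_diagonal, Matrix.diagonal_mul_diagonal]
      rfl
    have htr : Complex.re ((X * (1 - Pi))ᴴ * (X * (1 - Pi))).trace
        = ∑ i : Fin n, if (i : ℕ) < r then (0 : ℝ) else σ i ^ 2 := by
      rw [hfact, Matrix.trace_mul_cycle, ← mul_assoc, hV1, one_mul, hdiag,
        Matrix.trace_diagonal, Complex.re_sum,
        ← Equiv.sum_comp e
          (fun j => Complex.re ((1 - p j) * (hA.eigenvalues j : ℂ) * (1 - p j)))]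
      refine Finset.sum_congr rfl fun i _ => ?_
      simp only [hp, Equiv.symm_apply_apply]
      by_cases h : (i : ℕ) < r
      · simp [h]
      · rw [if_neg h, if_neg h, hsv i]; simp
    have hX2 : ∑ i, ∑ j, ‖X i j‖ ^ 2 = ∑ i, σ i ^ 2 := by
      rw [frob_trace, hΛsp, Matrix.trace_mul_cycle, hV1, one_mul, hΛdef,
        Matrix.trace_diagonal, Complex.re_sum,
        ← Equiv.sum_comp e (fun j => Complex.re ((RCLike.ofReal ∘ hA.eigenvalues) j))]
      refine Finset.sum_congr rfl fun i _ => ?_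
      rw [Function.comp_apply, ← hsv i]; simp [← Complex.ofReal_pow]
    have hXY2 : ∑ i, ∑ j, ‖(X - X * Pi) i j‖ ^ 2
        = ∑ i : Fin n, if (i : ℕ) < r then (0 : ℝ) else σ i ^ 2 := by
      rw [hXY, frob_trace]; exact htr
    rw [hXY2, hX2]
    -- the decay inequality
    set T : Finset (Fin n) := Finset.univ.filter (fun i : Fin n => ¬ (i : ℕ) < r) with hT
    set g : Fin n → Fin n :=
      fun i => ⟨i.1 - r, Nat.lt_of_le_of_lt (Nat.sub_le _ _) i.2⟩ with hg
    have hle : (∑ i : Fin n, if (i : ℕ) < r then (0 : ℝ) else σ i ^ 2)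
        ≤ Z ^ 2 * ∑ i, σ i ^ 2 := by
      have h0 : (∑ i : Fin n, if (i : ℕ) < r then (0 : ℝ) else σ i ^ 2)
          = ∑ i ∈ T, σ i ^ 2 := by
        rw [Finset.sum_ite, Finset.sum_const_zero, zero_add, hT]
      rw [h0]
      calc ∑ i ∈ T, σ i ^ 2 ≤ ∑ i ∈ T, Z ^ 2 * σ (g i) ^ 2 := by
            refine Finset.sum_le_sum fun i hi => ?_
            have hri : r ≤ (i : ℕ) := not_lt.mp (Finset.mem_filter.mp hi).2
            have hd : σ i ≤ Z * σ (g i) :=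
              hdecay (g i) i (by simp [hg]; omega)
            calc σ i ^ 2 ≤ (Z * σ (g i)) ^ 2 := by
                  exact pow_le_pow_left₀ (hnn i) hd 2
              _ = Z ^ 2 * σ (g i) ^ 2 := by ring
        _ = Z ^ 2 * ∑ i ∈ T, σ (g i) ^ 2 := by rw [Finset.mul_sum]
        _ ≤ Z ^ 2 * ∑ i, σ i ^ 2 := by
            refine mul_le_mul_of_nonneg_left ?_ (sq_nonneg Z)
            have hginj : ∀ a ∈ T, ∀ b ∈ T, g a = g b → a = b := by
              intro a ha b hb hab
              have h1 : r ≤ (a : ℕ) := not_lt.mp (Finset.mem_filter.mp ha).2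
              have h2 : r ≤ (b : ℕ) := not_lt.mp (Finset.mem_filter.mp hb).2
              have := congrArg Fin.val hab
              simp only [hg] at this
              exact Fin.ext (by omega)
            have himg : ∑ j ∈ T.image g, σ j ^ 2 = ∑ i ∈ T, σ (g i) ^ 2 :=
              Finset.sum_image hginj
            rw [← himg]
            exact Finset.sum_le_sum_of_subset_of_nonneg (Finset.subset_univ _)
              (fun i _ _ => sq_nonneg _)
    calc Real.sqrt (∑ i : Fin n, if (i : ℕ) < r then (0 : ℝ) else σ i ^ 2)
        ≤ Real.sqrt (Z ^ 2 * ∑ i, σ i ^ 2) := Real.sqrt_le_sqrt hle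
      _ = Z * Real.sqrt (∑ i, σ i ^ 2) := by
          rw [Real.sqrt_mul (sq_nonneg Z), Real.sqrt_sq hZ0]
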